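/- Equality in the sharp Sobolev inequality for coherent states (Theorem 3.2, equality part): Let k > 1/2 and q ≥ 2 be real numbers with kq > 2, set p = q + 1/k, and let f(ζ) = A(1−|ζ|²)^k with A > 0. Then all the integrals below are finite and equality holds: ∫_D |f|^q dν_k + (4/(kq(kq−2))) · ((2k−1)/(4π)) ∫_D |∇(|f|^{q/2})|² dA = ((2k−1)/(kq−1)) · ((kp−1)/(2k−1))^{q/p} · ((kq−1)/(kq−2)) · (∫_D |f|^p dν_k)^{q/p}. -/

import Mathlib

open MeasureTheory Metric

/-- The measure `ν_k` on the unit disc `D ⊆ ℂ`, with density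
`((2k−1)/π)(1−|ζ|²)^{−2}` with respect to Lebesgue measure. -/
noncomputable def nuMeasure (k : ℝ) : Measure ℂ :=
  (volume.restrict (ball (0 : ℂ) 1)).withDensity
    (fun ζ => ENNReal.ofReal ((2 * k - 1) / Real.pi * ((1 - ‖ζ‖ ^ 2) ^ 2)⁻¹))


lemma contRpowConst {a : ℝ} (ha : 0 ≤ a) : Continuous fun x : ℝ => x ^ a :=
  continuous_iff_continuousAt.2 fun x => Real.continuousAt_rpow_const x a (Or.inr ha)

lemma rpow_add_one' {x a : ℝ} (hx : 0 ≤ x) (ha : 0 < a) : x ^ (a + 1) = x ^ a * x := by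
  rcases eq_or_lt_of_le hx with h | h
  · rw [← h, Real.zero_rpow (by linarith), Real.zero_rpow ha.ne', mul_zero]
  · exact Real.rpow_add_one h.ne' a

lemma int_one {a : ℝ} (ha : 0 < a) :
    ∫ y in (0:ℝ)..1, y * (1 - y ^ 2) ^ a = 1 / (2 * (a + 1)) := by
  have key : ∀ y ∈ Set.uIcc (0:ℝ) 1,
      HasDerivAt (fun y : ℝ => -(1 - y ^ 2) ^ (a + 1) / (2 * (a + 1)))
        (y * (1 - y ^ 2) ^ a) y := by
    intro y _
    have h1 : HasDerivAt (fun y : ℝ => 1 - y ^ 2) (-(2 * y)) y := by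
      simpa using (hasDerivAt_pow 2 y).const_sub 1
    have h2 : HasDerivAt (fun x : ℝ => x ^ (a + 1))
        ((a + 1) * (1 - y ^ 2) ^ (a + 1 - 1)) (1 - y ^ 2) :=
      Real.hasDerivAt_rpow_const (Or.inr (by linarith))
    have h4 := ((h2.comp y h1).neg).div_const (2 * (a + 1))
    refine h4.congr_deriv ?_; symm
    rw [add_sub_cancel_right]
    field_simp
  rw [intervalIntegral.integral_eq_sub_of_hasDerivAt key]
  · norm_num
    rw [Real.zero_rpow (by linarith : a + 1 ≠ 0)]
    field_simp
    ring
  · exact (continuous_id.mul ((contRpowConst ha.le).comp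
      (continuous_const.sub (continuous_pow 2)))).intervalIntegrable 0 1

lemma int_two {a : ℝ} (ha : 0 < a) :
    ∫ y in (0:ℝ)..1, y ^ 3 * (1 - y ^ 2) ^ a = 1 / (2 * (a + 1) * (a + 2)) := by
  have key : ∀ y ∈ Set.uIcc (0:ℝ) 1,
      HasDerivAt (fun y : ℝ => (1 - y ^ 2) ^ (a + 2) / (2 * (a + 2))
        - (1 - y ^ 2) ^ (a + 1) / (2 * (a + 1)))
        (y ^ 3 * (1 - y ^ 2) ^ a) y := by
    intro y hy
    rw [Set.uIcc_of_le zero_le_one] at hy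
    have hx : (0:ℝ) ≤ 1 - y ^ 2 := by nlinarith [hy.1, hy.2]
    have h1 : HasDerivAt (fun y : ℝ => 1 - y ^ 2) (-(2 * y)) y := by
      simpa using (hasDerivAt_pow 2 y).const_sub 1
    have h2 : HasDerivAt (fun x : ℝ => x ^ (a + 2))
        ((a + 2) * (1 - y ^ 2) ^ (a + 2 - 1)) (1 - y ^ 2) :=
      Real.hasDerivAt_rpow_const (Or.inr (by linarith))
    have h3 : HasDerivAt (fun x : ℝ => x ^ (a + 1))
        ((a + 1) * (1 - y ^ 2) ^ (a + 1 - 1)) (1 - y ^ 2) :=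
      Real.hasDerivAt_rpow_const (Or.inr (by linarith))
    have h4 := (((h2.comp y h1).div_const (2 * (a + 2))).sub
      ((h3.comp y h1).div_const (2 * (a + 1))))
    refine h4.congr_deriv ?_; symm
    have e1 : a + 2 - 1 = a + 1 := by ring
    have e2 : a + 1 - 1 = a := by ring
    rw [e1, e2, rpow_add_one' hx ha]
    field_simp
    ring
  rw [intervalIntegral.integral_eq_sub_of_hasDerivAt key]
  · norm_num
    rw [Real.zero_rpow (by linarith : a + 2 ≠ 0), Real.zero_rpow (by linarith : a + 1 ≠ 0)]
    field_simp
    ring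
  · exact ((continuous_pow 3).mul ((contRpowConst ha.le).comp
      (continuous_const.sub (continuous_pow 2)))).intervalIntegrable 0 1


lemma ball_integral_norm (G : ℝ → ℝ) :
    ∫ z in ball (0:ℂ) 1, G ‖z‖ = 2 * Real.pi * ∫ y in (0:ℝ)..1, y * G y := by
  rw [← integral_indicator measurableSet_ball]
  have h1 : ∀ z : ℂ, (ball (0:ℂ) 1).indicator (fun z : ℂ => G ‖z‖) z
      = (Set.Iio (1:ℝ)).indicator G ‖z‖ := by
    intro z
    by_cases h : ‖z‖ < 1
    · rw [Set.indicator_of_mem (mem_ball_zero_iff.2 h),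
        Set.indicator_of_mem (Set.mem_Iio.2 h)]
    · rw [Set.indicator_of_notMem (fun hz => h (mem_ball_zero_iff.1 hz)),
        Set.indicator_of_notMem (fun hz => h (Set.mem_Iio.1 hz))]
  simp_rw [h1]
  rw [integral_fun_norm_addHaar volume ((Set.Iio (1:ℝ)).indicator G)]
  rw [Complex.finrank_real_complex, measureReal_def, Complex.volume_ball]
  have hvol : ((ENNReal.ofReal 1 ^ 2 * (NNReal.pi : ENNReal))).toReal = Real.pi := by
    simp
  rw [hvol]
  have h2 : ∀ y : ℝ, y ^ (2 - 1) • ((Set.Iio (1:ℝ)).indicator G) y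
      = (Set.Iio (1:ℝ)).indicator (fun y => y * G y) y := by
    intro y
    by_cases h : y ∈ Set.Iio (1:ℝ)
    · rw [Set.indicator_of_mem h, Set.indicator_of_mem h]
      simp [smul_eq_mul]
    · rw [Set.indicator_of_notMem h, Set.indicator_of_notMem h, smul_zero]
  simp_rw [h2]
  rw [integral_indicator measurableSet_Iio, Measure.restrict_restrict measurableSet_Iio,
    Set.Iio_inter_Ioi]
  rw [intervalIntegral.integral_of_le zero_le_one, integral_Ioc_eq_integral_Ioo]
  rw [nsmul_eq_mul, smul_eq_mul]
  push_cast
  ring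

lemma ball_int_one {a : ℝ} (ha : 0 < a) :
    ∫ z in ball (0:ℂ) 1, (1 - ‖z‖ ^ 2) ^ a = Real.pi / (a + 1) := by
  rw [ball_integral_norm (fun y => (1 - y ^ 2) ^ a), int_one ha]
  field_simp

lemma ball_int_two {a : ℝ} (ha : 0 < a) :
    ∫ z in ball (0:ℂ) 1, (1 - ‖z‖ ^ 2) ^ a * ‖z‖ ^ 2 = Real.pi / ((a + 1) * (a + 2)) := by
  rw [ball_integral_norm (fun y => (1 - y ^ 2) ^ a * y ^ 2)]
  have : ∫ y in (0:ℝ)..1, y * ((1 - y ^ 2) ^ a * y ^ 2)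
      = ∫ y in (0:ℝ)..1, y ^ 3 * (1 - y ^ 2) ^ a := by
    apply intervalIntegral.integral_congr
    intro y _
    ring
  rw [this, int_two ha]
  have h1 : (0:ℝ) < a + 1 := by linarith
  have h2 : (0:ℝ) < a + 2 := by linarith
  field_simp


lemma dens_meas (k : ℝ) :
    Measurable (fun ζ : ℂ => (2 * k - 1) / Real.pi * ((1 - ‖ζ‖ ^ 2) ^ 2)⁻¹) := by
  exact measurable_const.mul ((((measurable_norm.pow_const 2).const_sub 1).pow_const 2).inv)

lemma dens_nonneg (hk : 1/2 < k) (ζ : ℂ) :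
    0 ≤ (2 * k - 1) / Real.pi * ((1 - ‖ζ‖ ^ 2) ^ 2)⁻¹ := by
  have h1 : (0:ℝ) ≤ 2 * k - 1 := by linarith
  have h2 := Real.pi_pos
  positivity

lemma pointwise_dens {k s A x : ℝ} (hx : 0 < x) (hA : 0 < A) :
    |A * x ^ k| ^ s * ((2 * k - 1) / Real.pi * (x ^ 2)⁻¹)
      = (2 * k - 1) / Real.pi * (A ^ s * x ^ (k * s - 2)) := by
  have habs : |A * x ^ k| = A * x ^ k :=
    abs_of_pos (mul_pos hA (Real.rpow_pos_of_pos hx k))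
  rw [habs, Real.mul_rpow hA.le (Real.rpow_nonneg hx.le k),
    ← Real.rpow_mul hx.le k s]
  have h3 : ((x ^ 2)⁻¹ : ℝ) = x ^ (-2 : ℝ) := by
    rw [← Real.rpow_natCast x 2, ← Real.rpow_neg hx.le]
    norm_num
  rw [h3]
  have h4 : x ^ (k * s) * x ^ (-2 : ℝ) = x ^ (k * s - 2) := by
    rw [← Real.rpow_add hx]
    ring_nf
  rw [← h4]
  ring



lemma nu_core {k s A : ℝ} (hk : 1/2 < k) (hks : 2 < k * s) (hA : 0 < A) :
    Integrable (fun ζ : ℂ => |A * (1 - ‖ζ‖ ^ 2) ^ k| ^ s) (nuMeasure k) ∧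
    ∫ ζ, |A * (1 - ‖ζ‖ ^ 2) ^ k| ^ s ∂(nuMeasure k)
      = A ^ s * ((2 * k - 1) / (k * s - 1)) := by
  have hexp : (0:ℝ) < k * s - 2 := by linarith
  have hball : ∀ ζ ∈ ball (0:ℂ) 1, (0:ℝ) < 1 - ‖ζ‖ ^ 2 := by
    intro ζ hζ
    have h := mem_ball_zero_iff.1 hζ
    nlinarith [norm_nonneg ζ]
  have hcont : Continuous (fun ζ : ℂ =>
      (2 * k - 1) / Real.pi * (A ^ s * (1 - ‖ζ‖ ^ 2) ^ (k * s - 2))) :=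
    continuous_const.mul (continuous_const.mul ((contRpowConst hexp.le).comp
      (continuous_const.sub (continuous_norm.pow 2))))
  have hcont_int : IntegrableOn (fun ζ : ℂ =>
      (2 * k - 1) / Real.pi * (A ^ s * (1 - ‖ζ‖ ^ 2) ^ (k * s - 2)))
      (ball (0:ℂ) 1) volume :=
    (hcont.continuousOn.integrableOn_compact (isCompact_closedBall 0 1)).mono_set
      ball_subset_closedBall
  constructor
  · rw [nuMeasure, integrable_withDensity_iff ((dens_meas k).ennreal_ofReal)
      (Filter.Eventually.of_forall fun x => ENNReal.ofReal_lt_top)]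
    refine hcont_int.congr_fun ?_ measurableSet_ball
    intro ζ hζ
    show (2 * k - 1) / Real.pi * (A ^ s * (1 - ‖ζ‖ ^ 2) ^ (k * s - 2))
      = |A * (1 - ‖ζ‖ ^ 2) ^ k| ^ s
        * (ENNReal.ofReal ((2 * k - 1) / Real.pi * ((1 - ‖ζ‖ ^ 2) ^ 2)⁻¹)).toReal
    rw [ENNReal.toReal_ofReal (dens_nonneg hk ζ)]
    exact (pointwise_dens (hball ζ hζ) hA).symm
  · have hrfl : nuMeasure k = (volume.restrict (ball (0:ℂ) 1)).withDensity
        (fun ζ => ((((2 * k - 1) / Real.pi * ((1 - ‖ζ‖ ^ 2) ^ 2)⁻¹).toNNReal : NNReal) : ENNReal)) := rfl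
    rw [hrfl, integral_withDensity_eq_integral_smul ((dens_meas k).real_toNNReal)]
    refine (setIntegral_congr_fun (g := fun ζ : ℂ =>
      (2 * k - 1) / Real.pi * (A ^ s * (1 - ‖ζ‖ ^ 2) ^ (k * s - 2)))
      measurableSet_ball ?_).trans ?_
    · intro ζ hζ
      show (((2 * k - 1) / Real.pi * ((1 - ‖ζ‖ ^ 2) ^ 2)⁻¹).toNNReal : NNReal)
          • (|A * (1 - ‖ζ‖ ^ 2) ^ k| ^ s)
        = (2 * k - 1) / Real.pi * (A ^ s * (1 - ‖ζ‖ ^ 2) ^ (k * s - 2))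
      rw [NNReal.smul_def, Real.coe_toNNReal _ (dens_nonneg hk ζ), smul_eq_mul,
        mul_comm ((2 * k - 1) / Real.pi * ((1 - ‖ζ‖ ^ 2) ^ 2)⁻¹)]
      exact pointwise_dens (hball ζ hζ) hA
    · rw [integral_const_mul, integral_const_mul, ball_int_one hexp]
      have h1 : k * s - 2 + 1 = k * s - 1 := by ring
      rw [h1]
      have hpi := Real.pi_ne_zero
      have h2 : k * s - 1 ≠ 0 := by nlinarith
      field_simp

/-- Equality in the sharp Sobolev inequality for coherent states
(Theorem 3.2, equality part): for `f(ζ) = A(1−|ζ|²)^k` with `A > 0` all the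
relevant integrals are finite, and equality holds in the sharp Sobolev inequality. -/
theorem sharp_sobolev_equality_for_coherent_states
    (k q A p : ℝ) (hk : 1 / 2 < k) (hq : 2 ≤ q) (hkq : 2 < k * q) (hA : 0 < A)
    (hp : p = q + 1 / k)
    (f : ℂ → ℝ) (hf : ∀ ζ, f ζ = A * (1 - ‖ζ‖ ^ 2) ^ k) :
    Integrable (fun ζ => |f ζ| ^ q) (nuMeasure k) ∧
    Integrable (fun ζ => ‖fderiv ℝ (fun z => |f z| ^ (q / 2)) ζ‖ ^ 2)
      (volume.restrict (ball (0 : ℂ) 1)) ∧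
    Integrable (fun ζ => |f ζ| ^ p) (nuMeasure k) ∧
    (∫ ζ, |f ζ| ^ q ∂(nuMeasure k))
        + 4 / (k * q * (k * q - 2)) * ((2 * k - 1) / (4 * Real.pi)) *
            ∫ ζ in ball (0 : ℂ) 1, ‖fderiv ℝ (fun z => |f z| ^ (q / 2)) ζ‖ ^ 2
      = (2 * k - 1) / (k * q - 1) * ((k * p - 1) / (2 * k - 1)) ^ (q / p)
          * ((k * q - 1) / (k * q - 2))
          * (∫ ζ, |f ζ| ^ p ∂(nuMeasure k)) ^ (q / p) := by
  have hk0 : (0:ℝ) < k := by linarith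
  have hq0 : (0:ℝ) < q := by linarith
  have h2k1 : (0:ℝ) < 2 * k - 1 := by linarith
  have hkq1 : (0:ℝ) < k * q - 1 := by linarith
  have hkq2 : (0:ℝ) < k * q - 2 := by linarith
  have hkq0 : (0:ℝ) < k * q := by linarith
  have hkp : k * p = k * q + 1 := by
    rw [hp]
    field_simp
  have hkp2 : 2 < k * p := by linarith
  have hp0 : (0:ℝ) < p := by
    rw [hp]
    positivity
  have hfeq : ∀ s : ℝ, (fun ζ : ℂ => |f ζ| ^ s)
      = fun ζ : ℂ => |A * (1 - ‖ζ‖ ^ 2) ^ k| ^ s := by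
    intro s; funext ζ; rw [hf]
  have hQ := nu_core (s := q) hk hkq hA
  have hP := nu_core (s := p) hk hkp2 hA
  have hball : ∀ z ∈ ball (0:ℂ) 1, (0:ℝ) < 1 - ‖z‖ ^ 2 := by
    intro z hz
    have h := mem_ball_zero_iff.1 hz
    nlinarith [norm_nonneg z]
  -- fderiv computation
  have hfd : ∀ z ∈ ball (0:ℂ) 1, HasFDerivAt (fun w : ℂ => |f w| ^ (q / 2))
      ((-(2 * A ^ (q / 2) * (k * q / 2) * (1 - ‖z‖ ^ 2) ^ (k * q / 2 - 1)))
        • (innerSL ℝ z)) z := by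
    intro z hz
    have hx := hball z hz
    have h1 : HasFDerivAt (fun w : ℂ => (1:ℝ) - ‖w‖ ^ 2)
        (-(2 • (innerSL ℝ z)) : ℂ →L[ℝ] ℝ) z :=
      ((hasStrictFDerivAt_norm_sq z).hasFDerivAt).const_sub 1
    have h2 : HasDerivAt (fun t : ℝ => t ^ (k * q / 2))
        ((k * q / 2) * (1 - ‖z‖ ^ 2) ^ (k * q / 2 - 1)) (1 - ‖z‖ ^ 2) :=
      Real.hasDerivAt_rpow_const (Or.inl hx.ne')
    have h3 := (h2.comp_hasFDerivAt z h1).const_mul (A ^ (q / 2))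
    have heq : (fun w : ℂ => |f w| ^ (q / 2)) =ᶠ[nhds z]
        fun w : ℂ => A ^ (q / 2)
          * ((fun t : ℝ => t ^ (k * q / 2)) ∘ fun w : ℂ => (1:ℝ) - ‖w‖ ^ 2) w := by
      filter_upwards [isOpen_ball.mem_nhds hz] with w hw
      have hxw := hball w hw
      simp only [Function.comp]
      rw [hf w, abs_of_pos (mul_pos hA (Real.rpow_pos_of_pos hxw k)),
        Real.mul_rpow hA.le (Real.rpow_nonneg hxw.le k), ← Real.rpow_mul hxw.le,
        show k * (q / 2) = k * q / 2 from by ring]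
    have h4 := h3.congr_of_eventuallyEq heq
    refine h4.congr_fderiv ?_; symm
    ext w
    simp only [ContinuousLinearMap.smul_apply, ContinuousLinearMap.neg_apply,
      smul_eq_mul, two_smul, ContinuousLinearMap.add_apply]
    ring
  have hnorm : ∀ z ∈ ball (0:ℂ) 1,
      ‖fderiv ℝ (fun w : ℂ => |f w| ^ (q / 2)) z‖ ^ 2
        = A ^ q * (k * q) ^ 2 * ((1 - ‖z‖ ^ 2) ^ (k * q - 2) * ‖z‖ ^ 2) := by
    intro z hz
    have hx := hball z hz
    rw [(hfd z hz).fderiv, norm_smul, innerSL_apply_norm, Real.norm_eq_abs, abs_neg,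
      abs_of_nonneg (by positivity), mul_pow]
    have eA : (A ^ (q / 2)) ^ 2 = A ^ q := by
      rw [← Real.rpow_natCast (A ^ (q / 2)) 2, ← Real.rpow_mul hA.le]
      congr 1
      push_cast
      ring
    have ex : ((1 - ‖z‖ ^ 2) ^ (k * q / 2 - 1)) ^ 2 = (1 - ‖z‖ ^ 2) ^ (k * q - 2) := by
      rw [← Real.rpow_natCast ((1 - ‖z‖ ^ 2) ^ (k * q / 2 - 1)) 2, ← Real.rpow_mul hx.le]
      congr 1
      push_cast
      ring
    have e : (2 * A ^ (q / 2) * (k * q / 2) * (1 - ‖z‖ ^ 2) ^ (k * q / 2 - 1)) ^ 2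
        = (A ^ (q / 2)) ^ 2 * (k * q) ^ 2 * ((1 - ‖z‖ ^ 2) ^ (k * q / 2 - 1)) ^ 2 := by
      ring
    rw [e, eA, ex]
    ring
  have hcontG : Continuous (fun z : ℂ =>
      A ^ q * (k * q) ^ 2 * ((1 - ‖z‖ ^ 2) ^ (k * q - 2) * ‖z‖ ^ 2)) :=
    continuous_const.mul (((contRpowConst hkq2.le).comp
      (continuous_const.sub (continuous_norm.pow 2))).mul (continuous_norm.pow 2))
  have hGint : IntegrableOn (fun ζ : ℂ =>
      ‖fderiv ℝ (fun w : ℂ => |f w| ^ (q / 2)) ζ‖ ^ 2) (ball (0:ℂ) 1) volume := by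
    refine ((hcontG.continuousOn.integrableOn_compact
      (isCompact_closedBall 0 1)).mono_set ball_subset_closedBall).congr_fun ?_
      measurableSet_ball
    intro z hz
    exact (hnorm z hz).symm
  have hGval : ∫ ζ in ball (0:ℂ) 1, ‖fderiv ℝ (fun w : ℂ => |f w| ^ (q / 2)) ζ‖ ^ 2
      = A ^ q * (k * q) ^ 2 * (Real.pi / ((k * q - 1) * (k * q))) := by
    refine (setIntegral_congr_fun (g := fun z : ℂ =>
      A ^ q * (k * q) ^ 2 * ((1 - ‖z‖ ^ 2) ^ (k * q - 2) * ‖z‖ ^ 2))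
      measurableSet_ball (fun z hz => hnorm z hz)).trans ?_
    rw [integral_const_mul]
    rw [show (∫ z in ball (0:ℂ) 1, (1 - ‖z‖ ^ 2) ^ (k * q - 2) * ‖z‖ ^ 2)
        = Real.pi / ((k * q - 2 + 1) * (k * q - 2 + 2)) from ball_int_two hkq2]
    rw [show k * q - 2 + 1 = k * q - 1 from by ring, show k * q - 2 + 2 = k * q from by ring]
  refine ⟨?_, ?_, ?_, ?_⟩
  · rw [hfeq q]; exact hQ.1
  · exact hGint
  · rw [hfeq p]; exact hP.1
  · rw [hfeq q, hfeq p, hQ.2, hP.2, hGval]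
    rw [show k * p - 1 = k * q from by linarith]
    have e2 : (A ^ p * ((2 * k - 1) / (k * q))) ^ (q / p)
        = A ^ q * ((2 * k - 1) / (k * q)) ^ (q / p) := by
      rw [Real.mul_rpow (Real.rpow_nonneg hA.le p) (by positivity),
        ← Real.rpow_mul hA.le, show p * (q / p) = q from by field_simp]
    have e3 : ((k * q) / (2 * k - 1)) ^ (q / p) * ((2 * k - 1) / (k * q)) ^ (q / p) = 1 := by
      rw [← Real.mul_rpow (by positivity) (by positivity),
        show (k * q) / (2 * k - 1) * ((2 * k - 1) / (k * q)) = 1 from by field_simp; exact div_self (by linarith)]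
      exact Real.one_rpow _
    rw [e2]
    have e4 : (2 * k - 1) / (k * q - 1) * ((k * q) / (2 * k - 1)) ^ (q / p)
          * ((k * q - 1) / (k * q - 2)) * (A ^ q * ((2 * k - 1) / (k * q)) ^ (q / p))
        = (2 * k - 1) / (k * q - 1) * ((k * q - 1) / (k * q - 2)) * A ^ q
          * (((k * q) / (2 * k - 1)) ^ (q / p) * ((2 * k - 1) / (k * q)) ^ (q / p)) := by
      ring
    rw [e4, e3, mul_one]
    field_simp [hkq1.ne', hkq2.ne', hkq0.ne', Real.pi_ne_zero]
    ring
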